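/- Let X be a non-degenerate set of s points in generic position in P^{n_1} × ⋯ × P^{n_k} and j ∈ D + e_l for some l with N(j − 2e_l) = s (and j − 2e_l ∈ N^k). Then W_j = (I_X)_j, i.e., all of (I_X)_j is generated by elements of degree j − e_l. -/

import Mathlib

open MvPolynomial

namespace MultiProjPoints

/-- The variable set of the multigraded coordinate ring of
`ℙ^{n 0} × ⋯ × ℙ^{n (k-1)}`: variables `x_{i,j}` with `i : Fin k`, `0 ≤ j ≤ n i`. -/
abbrev Var (k : ℕ) (n : Fin k → ℕ) := Σ i : Fin k, Fin (n i + 1)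

/-- The `ℕ^k`-grading weight: `deg x_{i,j} = e_i`. -/
def wt (k : ℕ) (n : Fin k → ℕ) : Var k n → (Fin k → ℕ) := fun v => Pi.single v.1 1

/-- The `i`-th standard basis vector of `ℕ^k`. -/
def e {k : ℕ} (l : Fin k) : Fin k → ℕ := Pi.single l 1

variable (K : Type) [Field K]

/-- The graded piece `R_d` of the `ℕ^k`-graded polynomial ring. -/
noncomputable def piece (k : ℕ) (n : Fin k → ℕ) (d : Fin k → ℕ) :
    Submodule K (MvPolynomial (Var k n) K) :=
  weightedHomogeneousSubmodule K (wt k n) d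

/-- `N(d) = ∏ binom (n i + d i) (d i)`, the dimension of `R_d`. -/
def NN (k : ℕ) (n : Fin k → ℕ) (d : Fin k → ℕ) : ℕ := ∏ i, (n i + d i).choose (d i)

/-- A (representative of a) point of `ℙ^{n 0} × ⋯ × ℙ^{n (k-1)}`. -/
def PointRep (k : ℕ) (n : Fin k → ℕ) := (i : Fin k) → Fin (n i + 1) → K

/-- A valid representative: every coordinate block is nonzero. -/
def IsRep {k : ℕ} {n : Fin k → ℕ} (P : PointRep K k n) : Prop := ∀ i, P i ≠ 0

/-- Two representatives define the same point of multi-projective space. -/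
def ProjEq {k : ℕ} {n : Fin k → ℕ} (P Q : PointRep K k n) : Prop :=
  ∀ i, ∃ c : K, c ≠ 0 ∧ P i = c • Q i

/-- A tuple of representatives giving `s` distinct points. -/
def SPoints {k : ℕ} {n : Fin k → ℕ} {s : ℕ} (P : Fin s → PointRep K k n) : Prop :=
  (∀ a, IsRep K (P a)) ∧ ∀ a b, a ≠ b → ¬ ProjEq K (P a) (P b)

/-- The defining ideal `I_X` of the set of points: all polynomials vanishing on
the multi-cone over the points, i.e. the intersection of the point ideals. -/
noncomputable def idealOfPoints {k : ℕ} {n : Fin k → ℕ} {s : ℕ}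
    (P : Fin s → PointRep K k n) : Ideal (MvPolynomial (Var k n) K) :=
  ⨅ (a : Fin s), ⨅ (c : Fin k → K),
    RingHom.ker (eval (fun v : Var k n => c v.1 * P a v.1 v.2))

/-- The degree-`d` piece `I_d` of an ideal, as a `K`-subspace. -/
noncomputable def idealPiece {k : ℕ} {n : Fin k → ℕ}
    (I : Ideal (MvPolynomial (Var k n) K)) (d : Fin k → ℕ) :
    Submodule K (MvPolynomial (Var k n) K) :=
  (Submodule.restrictScalars K I) ⊓ piece K k n d

/-- The multigraded Hilbert function of `X`:
`H_X(d) = dim (R/I_X)_d = dim R_d - dim (I_X)_d`. -/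
noncomputable def hilbert {k : ℕ} {n : Fin k → ℕ} {s : ℕ}
    (P : Fin s → PointRep K k n) (d : Fin k → ℕ) : ℕ :=
  NN k n d - Module.finrank K (idealPiece K (idealOfPoints K P) d)

/-- Generic position: `s` distinct points whose Hilbert function is maximal. -/
def GenericPosition {k : ℕ} {n : Fin k → ℕ} {s : ℕ} (P : Fin s → PointRep K k n) : Prop :=
  SPoints K P ∧ ∀ d : Fin k → ℕ, hilbert K P d = min (NN k n d) s

/-- `R_{e_l}·V`: the span of all products of a variable of degree `e_l`
with an element of `V`. -/
noncomputable def mulSpan {k : ℕ} {n : Fin k → ℕ} (l : Fin k)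
    (V : Submodule K (MvPolynomial (Var k n) K)) :
    Submodule K (MvPolynomial (Var k n) K) :=
  Submodule.span K {g | ∃ (m : Fin (n l + 1)) (f : MvPolynomial (Var k n) K),
    f ∈ V ∧ g = X (⟨l, m⟩ : Var k n) * f}

/-- `D = min { i ∈ ℕ^k | N(i) > s }` (minimal elements for the componentwise order). -/
def Dset (k : ℕ) (n : Fin k → ℕ) (s : ℕ) : Set (Fin k → ℕ) :=
  {i | s < NN k n i ∧ ∀ j : Fin k → ℕ, s < NN k n j → j ≤ i → j = i}

/-- The irrelevant maximal ideal of `R`, generated by all the variables. -/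
noncomputable def irrelevant (k : ℕ) (n : Fin k → ℕ) : Ideal (MvPolynomial (Var k n) K) :=
  Ideal.span (Set.range (X : Var k n → MvPolynomial (Var k n) K))


section Aux

variable {k : ℕ} {n : Fin k → ℕ}

lemma weight_wt_apply (σ : Var k n →₀ ℕ) (i : Fin k) :
    Finsupp.weight (wt k n) σ i = ∑ m, σ ⟨i, m⟩ := by
  rw [Finsupp.weight_apply, Finsupp.sum_fintype _ _ (fun _ => by simp)]
  rw [Finset.sum_apply]
  rw [← Finset.univ_sigma_univ, Finset.sum_sigma]
  simp only [wt, Pi.smul_apply, Pi.single_apply, smul_eq_mul]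
  rw [Finset.sum_eq_single i]
  · simp
  · intro b _ hb
    simp [hb, Ne.symm hb]
  · simp

/-- Monomial exponents of multidegree `d` correspond to tuples of symmetric powers. -/
noncomputable def degEquiv (d : Fin k → ℕ) :
    {σ : Var k n →₀ ℕ // Finsupp.weight (wt k n) σ = d} ≃
      Π i, Sym (Fin (n i + 1)) (d i) :=
  { toFun := fun σ i => (Sym.equivNatSumOfFintype (Fin (n i + 1)) (d i)).symm
      ⟨fun m => σ.1 ⟨i, m⟩, by rw [← weight_wt_apply σ.1 i, σ.2]⟩
    invFun := fun g => ⟨Finsupp.equivFunOnFinite.symm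
        (fun v => (Sym.equivNatSumOfFintype (Fin (n v.1 + 1)) (d v.1)
           (g v.1) : Fin (n v.1 + 1) → ℕ) v.2), by
        funext i
        rw [weight_wt_apply]
        simp only [Finsupp.coe_equivFunOnFinite_symm,
          Sym.coe_equivNatSumOfFintype_apply_apply]
        exact (Multiset.sum_count_eq_card (fun a _ => Finset.mem_univ a)).trans (g i).2⟩
    left_inv := fun σ => Subtype.ext (by
      ext v
      obtain ⟨i, m⟩ := v
      simp)
    right_inv := fun g => by
      funext i
      apply (Sym.equivNatSumOfFintype (Fin (n i + 1)) (d i)).injective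
      apply Subtype.ext
      funext m
      simp }

noncomputable instance fintypeDeg (d : Fin k → ℕ) :
    Fintype {σ : Var k n →₀ ℕ // Finsupp.weight (wt k n) σ = d} :=
  Fintype.ofEquiv _ (degEquiv d).symm

lemma card_deg (d : Fin k → ℕ) :
    Fintype.card {σ : Var k n →₀ ℕ // Finsupp.weight (wt k n) σ = d} = NN k n d := by
  rw [Fintype.card_congr (degEquiv d), Fintype.card_pi]
  refine Finset.prod_congr rfl fun i _ => ?_
  rw [Sym.card_sym_eq_choose, Fintype.card_fin]
  congr 1
  omega

variable (K : Type) [Field K]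

noncomputable instance fintypeDegSet (d : Fin k → ℕ) :
    Fintype {σ : Var k n →₀ ℕ | Finsupp.weight (wt k n) σ = d} :=
  fintypeDeg d

lemma piece_eq_restrictSupport (d : Fin k → ℕ) :
    piece K k n d
      = MvPolynomial.restrictSupport K {x : Var k n →₀ ℕ | Finsupp.weight (wt k n) x = d} :=
  weightedHomogeneousSubmodule_eq_finsupp_supported K (wt k n) d

instance fdPiece (d : Fin k → ℕ) : FiniteDimensional K (piece K k n d) := by
  rw [piece_eq_restrictSupport]
  exact Module.Finite.of_basis (MvPolynomial.basisRestrictSupport K _)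

lemma finrank_piece (d : Fin k → ℕ) :
    Module.finrank K (piece K k n d) = NN k n d := by
  rw [piece_eq_restrictSupport,
    Module.finrank_eq_card_basis (MvPolynomial.basisRestrictSupport K _)]
  rw [← card_deg (n := n) d]
  exact Fintype.card_congr (Equiv.subtypeEquivRight fun _ => Iff.rfl)

/-- Evaluation at a point, as a linear map. -/
noncomputable def evalLin (x : Var k n → K) : MvPolynomial (Var k n) K →ₗ[K] K where
  toFun := eval x
  map_add' := by simp
  map_smul' c p := by simp [smul_eval]

/-- The affine representative of the `a`-th point. -/
def pt {s : ℕ} (P : Fin s → PointRep K k n) (a : Fin s) : Var k n → K :=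
  fun v => P a v.1 v.2

lemma eval_scale (c : Fin k → K) (x : Var k n → K) {d : Fin k → ℕ}
    {p : MvPolynomial (Var k n) K} (hp : p ∈ piece K k n d) :
    eval (fun v => c v.1 * x v) p = (∏ i, c i ^ d i) * eval x p := by
  rw [piece, mem_weightedHomogeneousSubmodule] at hp
  rw [eval_eq', eval_eq', Finset.mul_sum]
  refine Finset.sum_congr rfl fun σ hσ => ?_
  have hw : ∀ i, (∑ m, σ ⟨i, m⟩) = d i := fun i => by
    rw [← weight_wt_apply σ i, hp (mem_support_iff.mp hσ)]
  have h1 : ∏ v : Var k n, (c v.1 * x v) ^ σ v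
      = (∏ v : Var k n, c v.1 ^ σ v) * ∏ v : Var k n, x v ^ σ v := by
    rw [← Finset.prod_mul_distrib]
    exact Finset.prod_congr rfl fun v _ => mul_pow _ _ _
  have h2 : ∏ v : Var k n, c v.1 ^ σ v = ∏ i, c i ^ d i := by
    rw [← Finset.univ_sigma_univ, Finset.prod_sigma]
    refine Finset.prod_congr rfl fun i _ => ?_
    show (∏ m : Fin (n i + 1), c i ^ σ ⟨i, m⟩) = c i ^ d i
    rw [Finset.prod_pow_eq_pow_sum, hw i]
  rw [h1, h2]
  ring

lemma mem_idealPiece_iff {s : ℕ} {P : Fin s → PointRep K k n} {d : Fin k → ℕ}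
    {p : MvPolynomial (Var k n) K} :
    p ∈ idealPiece K (idealOfPoints K P) d ↔
      p ∈ piece K k n d ∧ ∀ a, eval (pt K P a) p = 0 := by
  constructor
  · intro hp
    obtain ⟨hI, hpc⟩ := Submodule.mem_inf.mp hp
    refine ⟨hpc, fun a => ?_⟩
    rw [Submodule.restrictScalars_mem, idealOfPoints] at hI
    have h1 := (Submodule.mem_iInf _).mp hI a
    have h2 := (Submodule.mem_iInf _).mp h1 (fun _ => (1 : K))
    rw [RingHom.mem_ker] at h2
    show eval (fun v => P a v.1 v.2) p = 0
    simpa using h2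
  · rintro ⟨hpc, hv⟩
    refine Submodule.mem_inf.mpr ⟨?_, hpc⟩
    rw [Submodule.restrictScalars_mem, idealOfPoints]
    refine (Submodule.mem_iInf _).mpr fun a => (Submodule.mem_iInf _).mpr fun c => ?_
    rw [RingHom.mem_ker]
    have := eval_scale K c (pt K P a) hpc
    simpa [pt, hv a] using this

lemma exists_linform [Infinite K] {s : ℕ} {P : Fin s → PointRep K k n}
    (hP : ∀ a, IsRep K (P a)) (l : Fin k) :
    ∃ c : Fin (n l + 1) → K, ∀ a, (∑ m, P a l m * c m) ≠ 0 := by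
  classical
  set q : MvPolynomial (Fin (n l + 1)) K :=
    ∏ a, ∑ m, MvPolynomial.C (P a l m) * MvPolynomial.X m with hq
  have hq0 : q ≠ 0 := by
    rw [hq]
    refine Finset.prod_ne_zero_iff.mpr fun a _ h0 => ?_
    obtain ⟨m, hm⟩ : ∃ m, P a l m ≠ 0 := by
      by_contra h
      push_neg at h
      exact hP a l (funext h)
    apply hm
    have := congrArg (MvPolynomial.coeff (Finsupp.single m 1)) h0
    simpa [MvPolynomial.coeff_sum, MvPolynomial.coeff_X', Finsupp.single_left_inj] using this
  have : ∃ x : Fin (n l + 1) → K, eval x q ≠ 0 := by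
    by_contra h
    push_neg at h
    exact hq0 (MvPolynomial.funext fun x => by rw [h x, map_zero])
  obtain ⟨x, hx⟩ := this
  refine ⟨x, fun a => ?_⟩
  rw [hq, map_prod] at hx
  have := Finset.prod_ne_zero_iff.mp hx a (Finset.mem_univ a)
  simpa using this

lemma exists_decomp (l : Fin k) (j : Fin k → ℕ) (hj : 1 ≤ j l)
    {F : MvPolynomial (Var k n) K} (hF : F ∈ piece K k n j) :
    ∃ Fm : Fin (n l + 1) → MvPolynomial (Var k n) K,
      (∀ m, Fm m ∈ piece K k n (j - e l)) ∧ F = ∑ m, X ⟨l, m⟩ * Fm m := by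
  classical
  rw [piece, mem_weightedHomogeneousSubmodule] at hF
  set pick : (Var k n →₀ ℕ) → Fin (n l + 1) := fun σ =>
    if h : ∃ m, σ ⟨l, m⟩ ≠ 0 then h.choose else 0 with hpick
  have hkey : ∀ σ ∈ F.support, σ ⟨l, pick σ⟩ ≠ 0 := by
    intro σ hσ
    have hsum : (∑ m, σ ⟨l, m⟩) = j l := by
      rw [← weight_wt_apply σ l, hF (mem_support_iff.mp hσ)]
    have hex : ∃ m, σ ⟨l, m⟩ ≠ 0 := by
      by_contra h
      push_neg at h
      rw [Finset.sum_congr rfl (fun m _ => h m)] at hsum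
      simp at hsum
      omega
    rw [hpick]
    simpa only [hex, dif_pos] using hex.choose_spec
  refine ⟨fun m => ∑ σ ∈ F.support.filter (fun σ => pick σ = m),
      monomial (σ - Finsupp.single ⟨l, m⟩ 1) (coeff σ F), fun m => ?_, ?_⟩
  · refine Submodule.sum_mem _ fun σ hσ => ?_
    rw [Finset.mem_filter] at hσ
    have hne := hkey σ hσ.1
    rw [hσ.2] at hne
    have hle : Finsupp.single (⟨l, m⟩ : Var k n) 1 ≤ σ :=
      Finsupp.single_le_iff.mpr (Nat.one_le_iff_ne_zero.mpr hne)
    have hadd : Finsupp.single (⟨l, m⟩ : Var k n) 1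
        + (σ - Finsupp.single ⟨l, m⟩ 1) = σ := add_tsub_cancel_of_le hle
    have hwσ : Finsupp.weight (wt k n) σ = j := hF (mem_support_iff.mp hσ.1)
    have hw : Finsupp.weight (wt k n) (σ - Finsupp.single ⟨l, m⟩ 1) = j - e l := by
      have h1 := congrArg (Finsupp.weight (wt k n)) hadd
      rw [map_add, hwσ] at h1
      have h2 : Finsupp.weight (wt k n) (Finsupp.single (⟨l, m⟩ : Var k n) 1)
          = e l := by
        rw [Finsupp.weight_apply, Finsupp.sum_single_index (by simp)]
        simp [wt, e]
      rw [h2] at h1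
      funext i
      have := congrFun h1 i
      simp only [Pi.add_apply, Pi.sub_apply] at this ⊢
      omega
    rw [piece, mem_weightedHomogeneousSubmodule]
    exact isWeightedHomogeneous_monomial _ _ _ hw
  · rw [Finset.sum_congr rfl (fun m _ => Finset.mul_sum _ _ _)]
    rw [Finset.sum_congr rfl (fun m (_ : m ∈ Finset.univ) => Finset.sum_congr rfl
      (fun σ hσ => ?_)), Finset.sum_fiberwise_of_maps_to (fun σ _ => Finset.mem_univ (pick σ))]
    · exact (support_sum_monomial_coeff F).symm
    · rw [Finset.mem_filter] at hσ
      have hne := hkey σ hσ.1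
      rw [hσ.2] at hne
      have hle : Finsupp.single (⟨l, m⟩ : Var k n) 1 ≤ σ :=
        Finsupp.single_le_iff.mpr (Nat.one_le_iff_ne_zero.mpr hne)
      rw [X, monomial_mul, one_mul, add_tsub_cancel_of_le hle]

end Aux

theorem W_eq_piece_of_N_stable (K : Type) [Field K] [IsAlgClosed K] [CharZero K]
    (k : ℕ) (n : Fin k → ℕ) {s : ℕ} (hnd : ∀ i, n i < s)
    (P : Fin s → PointRep K k n) (hgen : GenericPosition K P)
    (l : Fin k) (j : Fin k → ℕ) (hj2 : 2 ≤ j l)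
    (hjD : j - e l ∈ Dset k n s)
    (hN : NN k n (j - e l - e l) = s) :
    mulSpan K l (idealPiece K (idealOfPoints K P) (j - e l))
      = idealPiece K (idealOfPoints K P) j := by
  classical
  have hs1 : 1 ≤ s := by
    rw [← hN]
    exact Finset.prod_pos fun i _ => Nat.choose_pos (Nat.le_add_left _ _)
  set t : Fin k → ℕ := j - e l - e l with ht
  have hel : ∀ i, e l i = if i = l then 1 else 0 := fun i => by
    rw [e, Pi.single_apply]
  have hte : e l + t = j - e l := by
    funext i
    show e l i + (j i - e l i - e l i) = j i - e l i
    rcases eq_or_ne i l with rfl | hne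
    · simp [hel]; try omega
    · simp [hel, hne]; try omega
  have hej : e l + (j - e l) = j := by
    funext i
    show e l i + (j i - e l i) = j i
    rcases eq_or_ne i l with rfl | hne
    · simp [hel]; try omega
    · simp [hel, hne]; try omega
  -- the degree-`t` part of the ideal vanishes
  have hIt : idealPiece K (idealOfPoints K P) t = ⊥ := by
    have hh := hgen.2 t
    rw [hilbert, hN, min_self] at hh
    haveI : FiniteDimensional K (idealPiece K (idealOfPoints K P) t) :=
      Submodule.finiteDimensional_of_le (inf_le_right :
        idealPiece K (idealOfPoints K P) t ≤ piece K k n t)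
    have h0 : Module.finrank K (idealPiece K (idealOfPoints K P) t) = 0 := by omega
    exact Submodule.finrank_eq_zero.mp h0
  -- evaluation on the degree-`t` piece is surjective
  set Φ : piece K k n t →ₗ[K] (Fin s → K) :=
    (LinearMap.pi fun a => evalLin K (pt K P a)).domRestrict (piece K k n t) with hΦ
  have hΦinj : Function.Injective Φ := by
    refine LinearMap.ker_eq_bot.mp (Submodule.eq_bot_iff _ |>.mpr fun g hg => ?_)
    have hg0 : ∀ a, eval (pt K P a) (g : MvPolynomial (Var k n) K) = 0 := fun a => by
      have := congrFun (LinearMap.mem_ker.mp hg) a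
      simpa [hΦ, evalLin] using this
    have : (g : MvPolynomial (Var k n) K) ∈ idealPiece K (idealOfPoints K P) t :=
      (mem_idealPiece_iff K).mpr ⟨g.2, hg0⟩
    rw [hIt] at this
    exact Subtype.ext (by simpa using this)
  have hΦsurj : Function.Surjective Φ := by
    refine (LinearMap.injective_iff_surjective_of_finrank_eq_finrank ?_).mp hΦinj
    rw [finrank_piece, hN, Module.finrank_fin_fun]
  -- a product of linear forms avoiding the points
  obtain ⟨c, hc⟩ := exists_linform K (hgen.1.1) l
  set L : MvPolynomial (Var k n) K := ∑ m, c m • X (⟨l, m⟩ : Var k n) with hL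
  have hLp : L ∈ piece K k n (e l) := by
    refine Submodule.sum_mem _ fun m _ => Submodule.smul_mem _ _ ?_
    rw [piece, mem_weightedHomogeneousSubmodule]
    exact isWeightedHomogeneous_X K (wt k n) ⟨l, m⟩
  have hLv : ∀ a, eval (pt K P a) L = ∑ m, P a l m * c m := fun a => by
    rw [hL, map_sum]
    exact Finset.sum_congr rfl fun m _ => by
      rw [smul_eval, eval_X]; exact mul_comm _ _
  have hLa : ∀ a, eval (pt K P a) L ≠ 0 := fun a => by rw [hLv a]; exact hc a
  apply le_antisymm
  · -- easy inclusion
    rw [mulSpan, Submodule.span_le]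
    rintro gg ⟨m, f, hf, rfl⟩
    obtain ⟨hfp, hfv⟩ := (mem_idealPiece_iff K).mp hf
    refine (mem_idealPiece_iff K).mpr ⟨?_, fun a => by rw [map_mul, hfv a, mul_zero]⟩
    rw [piece, mem_weightedHomogeneousSubmodule, ← hej]
    exact (isWeightedHomogeneous_X K (wt k n) ⟨l, m⟩).mul
      ((mem_weightedHomogeneousSubmodule _ _ _ _).mp hfp)
  · -- hard inclusion
    intro F hF
    obtain ⟨hFp, hFv⟩ := (mem_idealPiece_iff K).mp hF
    obtain ⟨Fm, hFm, hFdec⟩ := exists_decomp K l j (by omega) hFp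
    have hgm : ∀ m : Fin (n l + 1), ∃ g, g ∈ piece K k n t ∧ ∀ a,
        eval (pt K P a) g = eval (pt K P a) (Fm m) * (eval (pt K P a) L)⁻¹ := by
      intro m
      obtain ⟨g, hg⟩ := hΦsurj (fun a => eval (pt K P a) (Fm m) * (eval (pt K P a) L)⁻¹)
      refine ⟨g, g.2, fun a => ?_⟩
      have := congrFun hg a
      simpa [hΦ, evalLin] using this
    choose g hgp hgv using hgm
    set G : MvPolynomial (Var k n) K := ∑ m, X (⟨l, m⟩ : Var k n) * g m with hG
    have hGmem : G ∈ idealPiece K (idealOfPoints K P) (j - e l) := by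
      refine (mem_idealPiece_iff K).mpr ⟨?_, fun a => ?_⟩
      · refine Submodule.sum_mem _ fun m _ => ?_
        rw [piece, mem_weightedHomogeneousSubmodule, ← hte]
        exact (isWeightedHomogeneous_X K (wt k n) ⟨l, m⟩).mul
          ((mem_weightedHomogeneousSubmodule _ _ _ _).mp (hgp m))
      · have hFva : (∑ m, P a l m * eval (pt K P a) (Fm m)) = 0 := by
          have h2 := hFv a
          rw [hFdec, map_sum] at h2
          rw [← h2]
          exact Finset.sum_congr rfl fun m _ => by rw [map_mul, eval_X]; rfl
        rw [hG, map_sum]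
        have h3 : ∀ m : Fin (n l + 1), eval (pt K P a) (X (⟨l, m⟩ : Var k n) * g m)
            = P a l m * eval (pt K P a) (Fm m) * (eval (pt K P a) L)⁻¹ := fun m => by
          rw [map_mul, eval_X, hgv m a, mul_assoc]; rfl
        rw [Finset.sum_congr rfl fun m _ => h3 m, ← Finset.sum_mul, hFva, zero_mul]
    have hkey : F = (∑ m, X (⟨l, m⟩ : Var k n) * (Fm m - L * g m)) + L * G := by
      rw [hFdec, hG, Finset.mul_sum, ← Finset.sum_add_distrib]
      exact Finset.sum_congr rfl fun m _ => by ring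
    rw [hkey, mulSpan]
    refine Submodule.add_mem _ ?_ ?_
    · refine Submodule.sum_mem _ fun m _ =>
        Submodule.subset_span ⟨m, Fm m - L * g m, ?_, rfl⟩
      refine (mem_idealPiece_iff K).mpr ⟨?_, fun a => ?_⟩
      · refine Submodule.sub_mem _ (hFm m) ?_
        rw [piece, mem_weightedHomogeneousSubmodule, ← hte]
        exact ((mem_weightedHomogeneousSubmodule _ _ _ _).mp hLp).mul
          ((mem_weightedHomogeneousSubmodule _ _ _ _).mp (hgp m))
      · rw [map_sub, map_mul, hgv m a,
          mul_comm ((eval (pt K P a)) (Fm m)) (((eval (pt K P a)) L)⁻¹), ← mul_assoc,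
          mul_inv_cancel₀ (hLa a), one_mul, sub_self]
    · rw [hL, Finset.sum_mul]
      refine Submodule.sum_mem _ fun m _ => ?_
      rw [smul_mul_assoc]
      exact Submodule.smul_mem _ _ (Submodule.subset_span ⟨m, G, hGmem, rfl⟩)

end MultiProjPoints
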